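/- Let λ, μ, ν > 0, θ > 0, α, β ∈ ℝ, and set D = μ²·sin²(α+β) + ν²·cos²(α+β). Define E_g = cosh²θ·(λ²cosh²θ + sinh²θ·D), F_g = −cosh²θ·sinh²θ·(λ² + D), G_g = sinh²θ·(λ²sinh²θ + cosh²θ·D), and E_h = cosh²θ·(−λ²cosh²θ + sinh²θ·D), F_h = cosh²θ·sinh²θ·(λ² − D), G_h = sinh²θ·(−λ²sinh²θ + cosh²θ·D). Then E_g·G_g − F_g² = λ²·cosh²θ·sinh²θ·D > 0, E_h·G_h − F_h² = −λ²·cosh²θ·sinh²θ·D ≠ 0, and (G_h + F_h)/(E_h·G_h − F_h²) = (G_g + F_g)/(E_g·G_g − F_g²), (E_h + F_h)/(E_h·G_h − F_h²) = (E_g + F_g)/(E_g·G_g − F_g²), (G_h − E_h)/(E_h·G_h − F_h²) = (G_g − E_g)/(E_g·G_g − F_g²). -/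
import Mathlib


open Real Set

theorem first_fundamental_form_identities_dual_space
    (l m n : ℝ) (hl : 0 < l) (hm : 0 < m) (hn : 0 < n)
    (θ : ℝ) (hθ : 0 < θ) (α β : ℝ)
    (D : ℝ) (hD : D = m ^ 2 * Real.sin (α + β) ^ 2 + n ^ 2 * Real.cos (α + β) ^ 2)
    (Eg Fg Gg Eh Fh Gh : ℝ)
    (hEg : Eg = Real.cosh θ ^ 2 * (l ^ 2 * Real.cosh θ ^ 2 + Real.sinh θ ^ 2 * D))
    (hFg : Fg = -(Real.cosh θ ^ 2 * Real.sinh θ ^ 2 * (l ^ 2 + D)))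
    (hGg : Gg = Real.sinh θ ^ 2 * (l ^ 2 * Real.sinh θ ^ 2 + Real.cosh θ ^ 2 * D))
    (hEh : Eh = Real.cosh θ ^ 2 * (-(l ^ 2) * Real.cosh θ ^ 2 + Real.sinh θ ^ 2 * D))
    (hFh : Fh = Real.cosh θ ^ 2 * Real.sinh θ ^ 2 * (l ^ 2 - D))
    (hGh : Gh = Real.sinh θ ^ 2 * (-(l ^ 2) * Real.sinh θ ^ 2 + Real.cosh θ ^ 2 * D)) :
    (Eg * Gg - Fg ^ 2 = l ^ 2 * Real.cosh θ ^ 2 * Real.sinh θ ^ 2 * D ∧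
      0 < Eg * Gg - Fg ^ 2) ∧
    (Eh * Gh - Fh ^ 2 = -(l ^ 2 * Real.cosh θ ^ 2 * Real.sinh θ ^ 2 * D) ∧
      Eh * Gh - Fh ^ 2 ≠ 0) ∧
    (Gh + Fh) / (Eh * Gh - Fh ^ 2) = (Gg + Fg) / (Eg * Gg - Fg ^ 2) ∧
    (Eh + Fh) / (Eh * Gh - Fh ^ 2) = (Eg + Fg) / (Eg * Gg - Fg ^ 2) ∧
    (Gh - Eh) / (Eh * Gh - Fh ^ 2) = (Gg - Eg) / (Eg * Gg - Fg ^ 2) := by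
  have hc : Real.cosh θ ^ 2 = Real.sinh θ ^ 2 + 1 := Real.cosh_sq θ
  have hs : 0 < Real.sinh θ := by positivity
  have hch : 0 < Real.cosh θ := Real.cosh_pos θ
  have hDpos : 0 < D := by
    rw [hD]
    have h1 := Real.sin_sq_add_cos_sq (α + β)
    rcases le_total (m ^ 2) (n ^ 2) with h | h
    · nlinarith [mul_nonneg (sub_nonneg.2 h) (sq_nonneg (Real.cos (α + β))), mul_pos hm hm]
    · nlinarith [mul_nonneg (sub_nonneg.2 h) (sq_nonneg (Real.sin (α + β))), mul_pos hn hn]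
  have hP : 0 < l ^ 2 * Real.cosh θ ^ 2 * Real.sinh θ ^ 2 * D := by positivity
  have hdg : Eg * Gg - Fg ^ 2 = l ^ 2 * Real.cosh θ ^ 2 * Real.sinh θ ^ 2 * D := by
    rw [hEg, hFg, hGg, hc]; ring
  have hdh : Eh * Gh - Fh ^ 2 = -(l ^ 2 * Real.cosh θ ^ 2 * Real.sinh θ ^ 2 * D) := by
    rw [hEh, hFh, hGh, hc]; ring
  have hdgne : Eg * Gg - Fg ^ 2 ≠ 0 := by rw [hdg]; exact hP.ne'
  have hdhne : Eh * Gh - Fh ^ 2 ≠ 0 := by rw [hdh]; exact (neg_neg_iff_pos.2 hP).ne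
  refine ⟨⟨hdg, hdg ▸ hP⟩, ⟨hdh, hdhne⟩, ?_, ?_, ?_⟩ <;>
    rw [div_eq_div_iff hdhne hdgne, hdg, hdh] <;> simp only [hEg, hFg, hGg, hEh, hFh, hGh, hc] <;> ring
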